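/- Let 0 < α ≤ 1/2 and |γ| ≤ α/(96 N²), and set g(x) = αx² + γx⁴ on [N, 2N]. Let z(y) be the inverse function of g′ and g*(y) = g(z(y)) − y·z(y). Then g*(y) = −y²/(4α) + γy⁴/(16α⁴) − γ²y⁶/(16α⁷) + v(y), where v satisfies |v(y)| ≪ |γ|³N⁸/α² and |v′(y)| ≪ |γ|³N⁷/α³ on the domain of g*. -/

import Mathlib

open Filter Set

private lemma key_id (α γ x : ℝ) (hα : α ≠ 0) :
    (α*x^2 + γ*x^4) - (2*α*x + 4*γ*x^3) * x
      = -(2*α*x + 4*γ*x^3)^2/(4*α) + γ*(2*α*x + 4*γ*x^3)^4/(16*α^4)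
        - γ^2*(2*α*x + 4*γ*x^3)^6/(16*α^7)
        + 4*γ^3/α^2 * (6*x^8 + 52*(γ/α)*x^10 + 156*(γ/α)^2*x^12
            + 240*(γ/α)^3*x^14 + 192*(γ/α)^4*x^16 + 64*(γ/α)^5*x^18) := by
  field_simp
  ring

set_option maxHeartbeats 1000000 in
theorem stmt_16 :
    ∃ C : ℝ, 0 < C ∧ ∀ N α γ : ℝ, 2 ≤ N → 0 < α → α ≤ 1/2 →
      |γ| ≤ α / (96 * N^2) →
      ∀ z : ℝ → ℝ,
        (∀ y ∈ Set.Icc (2*α*N + 4*γ*N^3) (2*α*(2*N) + 4*γ*(2*N)^3),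
          z y ∈ Set.Icc N (2*N) ∧ 2*α*(z y) + 4*γ*(z y)^3 = y) →
        ∃ v : ℝ → ℝ,
          (∀ y ∈ Set.Icc (2*α*N + 4*γ*N^3) (2*α*(2*N) + 4*γ*(2*N)^3),
            (α*(z y)^2 + γ*(z y)^4) - y * z y
              = -y^2/(4*α) + γ*y^4/(16*α^4) - γ^2*y^6/(16*α^7) + v y) ∧
          (∀ y ∈ Set.Icc (2*α*N + 4*γ*N^3) (2*α*(2*N) + 4*γ*(2*N)^3),
            |v y| ≤ C * |γ|^3 * N^8 / α^2) ∧
          (∀ y ∈ Set.Icc (2*α*N + 4*γ*N^3) (2*α*(2*N) + 4*γ*(2*N)^3),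
            |deriv v y| ≤ C * |γ|^3 * N^7 / α^3) := by
  refine ⟨10^6, by norm_num, ?_⟩
  intro N α γ hN hα hα2 hγ z hz
  have hN0 : (0:ℝ) < N := by linarith
  have hαne : α ≠ 0 := ne_of_gt hα
  have hγ' : |γ| * (96*N^2) ≤ α := by
    have := (le_div_iff₀ (by positivity : (0:ℝ) < 96*N^2)).mp hγ
    linarith
  -- the clamp function
  set c : ℝ → ℝ := fun t => max 0 (min t (5*N/2)) with hc_def
  have hc0 : ∀ t, 0 ≤ c t := fun t => le_max_left _ _
  have hcm : ∀ t, c t ≤ 5*N/2 := fun t => max_le (by linarith) (min_le_right _ _)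
  have hcmono : Monotone c := fun a b hab => max_le_max le_rfl (min_le_min hab le_rfl)
  have hcid : ∀ t, 0 ≤ t → t ≤ 5*N/2 → c t = t := by
    intro t h0 h1
    simp only [hc_def]
    rw [min_eq_left h1, max_eq_right h0]
  -- the global monotone extension
  set G : ℝ → ℝ := fun t => (2*α*(c t) + 4*γ*(c t)^3) + α*(t - c t) with hG_def
  have hfmono : ∀ p q : ℝ, 0 ≤ p → p ≤ q → q ≤ 5*N/2 →
      (2*α*p + 4*γ*p^3) - α*p ≤ (2*α*q + 4*γ*q^3) - α*q := by
    intro p q hp hpq hqm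
    have hq0 : 0 ≤ q := le_trans hp hpq
    have h75 : p^2 + p*q + q^2 ≤ 75*N^2/4 := by nlinarith
    have h3 : q^3 - p^3 ≤ (q - p) * (75*N^2/4) := by
      nlinarith [mul_le_mul_of_nonneg_left h75 (sub_nonneg.2 hpq)]
    have h3' : 0 ≤ q^3 - p^3 := by nlinarith [pow_le_pow_left₀ hp hpq 3]
    rcases le_or_gt 0 γ with h | h
    · nlinarith [mul_nonneg h h3']
    · have hA : 0 ≤ α + 75*γ*N^2 := by
        have h96 := hγ'
        rw [abs_of_neg h] at h96
        nlinarith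
      have h4 := mul_le_mul_of_nonneg_left h3 (by linarith : (0:ℝ) ≤ -(4*γ))
      nlinarith [mul_nonneg (sub_nonneg.2 hpq) hA]
  have hGmono : StrictMono G := by
    intro a b hab
    have h1 := hfmono (c a) (c b) (hc0 a) (hcmono hab.le) (hcm b)
    simp only [hG_def]
    nlinarith [mul_lt_mul_of_pos_left hab hα]
  have hccont : Continuous c :=
    continuous_const.max (continuous_id.min continuous_const)
  have hGcont : Continuous G := by
    simp only [hG_def]
    exact ((continuous_const.mul hccont).add
      (continuous_const.mul (hccont.pow 3))).add
      (continuous_const.mul (continuous_id.sub hccont))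
  have hc00 : c 0 = 0 := hcid 0 le_rfl (by linarith)
  have hGlow : ∀ t, 0 ≤ t → α*t ≤ G t := by
    intro t ht
    have := hfmono 0 (c t) le_rfl (hc0 t) (hcm t)
    simp only [hG_def]
    nlinarith [this]
  have hGhigh : ∀ t, t ≤ 0 → G t ≤ α*t := by
    intro t ht
    have hct : c t = 0 := by
      simp only [hc_def]
      rw [min_eq_left (by linarith), max_eq_left ht]
    simp only [hG_def, hct]
    nlinarith
  have hGtop : Tendsto G atTop atTop := by
    refine tendsto_atTop_mono' atTop ?_ ((tendsto_const_mul_atTop_of_pos hα).2 tendsto_id)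
    filter_upwards [eventually_ge_atTop (0:ℝ)] with t ht
    exact hGlow t ht
  have hGbot : Tendsto G atBot atBot := by
    refine tendsto_atBot_mono' atBot ?_ ((tendsto_const_mul_atBot_of_pos hα).2 tendsto_id)
    filter_upwards [eventually_le_atBot (0:ℝ)] with t ht
    exact hGhigh t ht
  have hGsurj : Function.Surjective G := hGcont.surjective hGtop hGbot
  set e := StrictMono.orderIsoOfSurjective G hGmono hGsurj with he_def
  have heG : ∀ u, e.symm (G u) = u := fun u => e.symm_apply_apply u
  have hGe : ∀ t, G (e.symm t) = t := fun t => e.apply_symm_apply t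
  have hζcont : Continuous (fun t => e.symm t) := e.symm.continuous
  -- agreement of e.symm with z on the interval
  have setup : ∀ y ∈ Set.Icc (2*α*N + 4*γ*N^3) (2*α*(2*N) + 4*γ*(2*N)^3),
      e.symm y = z y := by
    intro y hy
    obtain ⟨hx1, hx2⟩ := hz y hy
    have hcx : c (z y) = z y := hcid _ (by linarith [hx1.1]) (by linarith [hx1.2])
    have hGx : G (z y) = y := by
      simp only [hG_def, hcx]
      linarith [hx2]
    calc e.symm y = e.symm (G (z y)) := by rw [hGx]
      _ = z y := heG _
  refine ⟨(fun x : ℝ => 4*γ^3/α^2 * (6*x^8 + 52*(γ/α)*x^10 + 156*(γ/α)^2*x^12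
      + 240*(γ/α)^3*x^14 + 192*(γ/α)^4*x^16 + 64*(γ/α)^5*x^18))
      ∘ (fun t => e.symm t), ?_, ?_, ?_⟩
  · -- the exact identity
    intro y hy
    obtain ⟨hx1, hx2⟩ := hz y hy
    have hey := setup y hy
    simp only [Function.comp_apply, hey]
    set x := z y with hx_def
    rw [← hx2]
    exact key_id α γ x hαne
  · -- value bound
    intro y hy
    obtain ⟨hx1, hx2⟩ := hz y hy
    have hey := setup y hy
    set x := z y with hx_def
    have hx0 : (0:ℝ) < x := by linarith [hx1.1]
    have hxsq : x^2 ≤ 4*N^2 := by nlinarith [hx1.1, hx1.2]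
    have hwabs : |γ/α*x^2| ≤ 1/24 := by
      rw [abs_mul, abs_div, abs_of_pos hα, abs_of_nonneg (sq_nonneg x),
        div_mul_eq_mul_div, div_le_iff₀ hα]
      nlinarith [mul_le_mul_of_nonneg_left hxsq (abs_nonneg γ), hγ']
    have hpow : ∀ k : ℕ, |(γ/α*x^2)^k| ≤ (1/24)^k := fun k => by
      rw [abs_pow]; exact pow_le_pow_left₀ (abs_nonneg _) hwabs k
    have h1 := abs_le.1 hwabs
    have h2 := abs_le.1 (hpow 2)
    have h3 := abs_le.1 (hpow 3)
    have h4 := abs_le.1 (hpow 4)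
    have h5 := abs_le.1 (hpow 5)
    have hinner : |6 + 52*(γ/α*x^2) + 156*(γ/α*x^2)^2 + 240*(γ/α*x^2)^3
        + 192*(γ/α*x^2)^4 + 64*(γ/α*x^2)^5| ≤ 9 := by
      rw [abs_le]
      constructor <;> linarith [h1.1, h1.2, h2.1, h2.2, h3.1, h3.2, h4.1, h4.2, h5.1, h5.2]
    have hvy : ((fun x : ℝ => 4*γ^3/α^2 * (6*x^8 + 52*(γ/α)*x^10 + 156*(γ/α)^2*x^12
        + 240*(γ/α)^3*x^14 + 192*(γ/α)^4*x^16 + 64*(γ/α)^5*x^18))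
        ∘ (fun t => e.symm t)) y
        = (4*γ^3/α^2*x^8) * (6 + 52*(γ/α*x^2) + 156*(γ/α*x^2)^2 + 240*(γ/α*x^2)^3
          + 192*(γ/α*x^2)^4 + 64*(γ/α*x^2)^5) := by
      simp only [Function.comp_apply, hey]
      ring
    rw [hvy, abs_mul]
    have hA : |4*γ^3/α^2*x^8| = 4*|γ|^3/α^2*x^8 := by
      rw [abs_mul, abs_div, abs_mul, abs_pow, abs_pow, abs_pow, abs_of_pos hα,
        abs_of_pos hx0]
      norm_num
    rw [hA]
    have hx8 : x^8 ≤ 256*N^8 := by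
      calc x^8 ≤ (2*N)^8 := pow_le_pow_left₀ hx0.le hx1.2 8
        _ = 256*N^8 := by ring
    have hg3 : (0:ℝ) ≤ |γ|^3/α^2 := div_nonneg (by positivity) (by positivity)
    calc 4*|γ|^3/α^2*x^8 * |6 + 52*(γ/α*x^2) + 156*(γ/α*x^2)^2 + 240*(γ/α*x^2)^3
          + 192*(γ/α*x^2)^4 + 64*(γ/α*x^2)^5|
        ≤ 4*|γ|^3/α^2*x^8 * 9 := by
          apply mul_le_mul_of_nonneg_left hinner
          have : (0:ℝ) ≤ x^8 := by positivity
          positivity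
      _ = (36*x^8) * (|γ|^3/α^2) := by ring
      _ ≤ (36*(256*N^8)) * (|γ|^3/α^2) := by
          apply mul_le_mul_of_nonneg_right (by linarith) hg3
      _ ≤ (10^6*N^8) * (|γ|^3/α^2) := by
          apply mul_le_mul_of_nonneg_right ?_ hg3
          nlinarith [pow_nonneg hN0.le 8]
      _ = 10^6*|γ|^3*N^8/α^2 := by ring
  · -- derivative bound
    intro y hy
    obtain ⟨hx1, hx2⟩ := hz y hy
    have hey := setup y hy
    set x := z y with hx_def
    have hx0 : (0:ℝ) < x := by linarith [hx1.1]
    have hxsq : x^2 ≤ 4*N^2 := by nlinarith [hx1.1, hx1.2]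
    have hwabs : |γ/α*x^2| ≤ 1/24 := by
      rw [abs_mul, abs_div, abs_of_pos hα, abs_of_nonneg (sq_nonneg x),
        div_mul_eq_mul_div, div_le_iff₀ hα]
      nlinarith [mul_le_mul_of_nonneg_left hxsq (abs_nonneg γ), hγ']
    have hpow : ∀ k : ℕ, |(γ/α*x^2)^k| ≤ (1/24)^k := fun k => by
      rw [abs_pow]; exact pow_le_pow_left₀ (abs_nonneg _) hwabs k
    have h1 := abs_le.1 hwabs
    have h2 := abs_le.1 (hpow 2)
    have h3 := abs_le.1 (hpow 3)
    have h4 := abs_le.1 (hpow 4)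
    have h5 := abs_le.1 (hpow 5)
    have hd : 3*α/2 ≤ 2*α + 12*γ*x^2 := by
      nlinarith [mul_le_mul_of_nonneg_left hxsq (abs_nonneg γ), hγ',
        mul_nonneg (by linarith [neg_abs_le γ] : (0:ℝ) ≤ γ + |γ|) (sq_nonneg x)]
    have hr0 : (0:ℝ) < 2*α + 12*γ*x^2 := by linarith
    have hne2 : 2*α + 12*γ*x^2 ≠ 0 := ne_of_gt hr0
    -- eventual local inverse
    have hmem : e.symm y ∈ Set.Ioo (0:ℝ) (5*N/2) := by
      rw [hey]
      exact ⟨by linarith [hx1.1], by linarith [hx1.2]⟩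
    have hev : ∀ᶠ t in nhds y, (fun u : ℝ => 2*α*u + 4*γ*u^3) (e.symm t) = t := by
      filter_upwards [(isOpen_Ioo.preimage hζcont).mem_nhds hmem] with t ht
      have hct : c (e.symm t) = e.symm t := hcid _ ht.1.le ht.2.le
      have := hGe t
      simp only [hG_def, hct] at this
      show 2*α*(e.symm t) + 4*γ*(e.symm t)^3 = t
      linarith [this]
    have hf : HasDerivAt (fun u : ℝ => 2*α*u + 4*γ*u^3) (2*α + 12*γ*x^2) (e.symm y) := by
      rw [hey]
      have h1' := (hasDerivAt_id x).const_mul (2*α)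
      have h3' := (hasDerivAt_pow 3 x).const_mul (4*γ)
      refine (h1'.add h3').congr_deriv ?_
      push_cast
      ring
    have hζd : HasDerivAt (fun t => e.symm t) (2*α + 12*γ*x^2)⁻¹ y :=
      HasDerivAt.of_local_left_inverse hζcont.continuousAt hf hne2 hev
    have hp : HasDerivAt (fun x : ℝ => 6*x^8 + 52*(γ/α)*x^10 + 156*(γ/α)^2*x^12
        + 240*(γ/α)^3*x^14 + 192*(γ/α)^4*x^16 + 64*(γ/α)^5*x^18)
        (48*x^7 + 520*(γ/α)*x^9 + 1872*(γ/α)^2*x^11 + 3360*(γ/α)^3*x^13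
          + 3072*(γ/α)^4*x^15 + 1152*(γ/α)^5*x^17) x := by
      have g8 := (hasDerivAt_pow 8 x).const_mul (6:ℝ)
      have g10 := (hasDerivAt_pow 10 x).const_mul (52*(γ/α))
      have g12 := (hasDerivAt_pow 12 x).const_mul (156*(γ/α)^2)
      have g14 := (hasDerivAt_pow 14 x).const_mul (240*(γ/α)^3)
      have g16 := (hasDerivAt_pow 16 x).const_mul (192*(γ/α)^4)
      have g18 := (hasDerivAt_pow 18 x).const_mul (64*(γ/α)^5)
      refine (((((g8.add g10).add g12).add g14).add g16).add g18).congr_deriv ?_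
      push_cast
      ring
    have hW : HasDerivAt (fun x : ℝ => 4*γ^3/α^2 * (6*x^8 + 52*(γ/α)*x^10
        + 156*(γ/α)^2*x^12 + 240*(γ/α)^3*x^14 + 192*(γ/α)^4*x^16 + 64*(γ/α)^5*x^18))
        (4*γ^3/α^2 * (48*x^7 + 520*(γ/α)*x^9 + 1872*(γ/α)^2*x^11 + 3360*(γ/α)^3*x^13
          + 3072*(γ/α)^4*x^15 + 1152*(γ/α)^5*x^17)) (e.symm y) := by
      rw [hey]
      exact hp.const_mul (4*γ^3/α^2)
    have hv : HasDerivAt ((fun x : ℝ => 4*γ^3/α^2 * (6*x^8 + 52*(γ/α)*x^10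
        + 156*(γ/α)^2*x^12 + 240*(γ/α)^3*x^14 + 192*(γ/α)^4*x^16 + 64*(γ/α)^5*x^18))
        ∘ (fun t => e.symm t))
        ((4*γ^3/α^2 * (48*x^7 + 520*(γ/α)*x^9 + 1872*(γ/α)^2*x^11 + 3360*(γ/α)^3*x^13
          + 3072*(γ/α)^4*x^15 + 1152*(γ/α)^5*x^17)) * (2*α + 12*γ*x^2)⁻¹) y :=
      HasDerivAt.comp y hW hζd
    rw [hv.deriv]
    -- bound the derivative value
    have hinner2 : |48 + 520*(γ/α*x^2) + 1872*(γ/α*x^2)^2 + 3360*(γ/α*x^2)^3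
        + 3072*(γ/α*x^2)^4 + 1152*(γ/α*x^2)^5| ≤ 74 := by
      rw [abs_le]
      constructor <;> linarith [h1.1, h1.2, h2.1, h2.2, h3.1, h3.2, h4.1, h4.2, h5.1, h5.2]
    have hDeq : 48*x^7 + 520*(γ/α)*x^9 + 1872*(γ/α)^2*x^11 + 3360*(γ/α)^3*x^13
        + 3072*(γ/α)^4*x^15 + 1152*(γ/α)^5*x^17
        = x^7 * (48 + 520*(γ/α*x^2) + 1872*(γ/α*x^2)^2 + 3360*(γ/α*x^2)^3
          + 3072*(γ/α*x^2)^4 + 1152*(γ/α*x^2)^5) := by ring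
    have hx7pos : (0:ℝ) < x^7 := pow_pos hx0 7
    have hDle : |48*x^7 + 520*(γ/α)*x^9 + 1872*(γ/α)^2*x^11 + 3360*(γ/α)^3*x^13
        + 3072*(γ/α)^4*x^15 + 1152*(γ/α)^5*x^17| ≤ 74 * x^7 := by
      rw [hDeq, abs_mul, abs_of_pos hx7pos]
      calc x^7 * |48 + 520*(γ/α*x^2) + 1872*(γ/α*x^2)^2 + 3360*(γ/α*x^2)^3
            + 3072*(γ/α*x^2)^4 + 1152*(γ/α*x^2)^5| ≤ x^7 * 74 :=
          mul_le_mul_of_nonneg_left hinner2 hx7pos.le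
        _ = 74 * x^7 := by ring
    have hA : |4*γ^3/α^2| = 4*|γ|^3/α^2 := by
      rw [abs_div, abs_mul, abs_pow, abs_pow, abs_of_pos hα]
      norm_num
    have hrle : (2*α + 12*γ*x^2)⁻¹ ≤ 2/(3*α) := by
      have h := inv_anti₀ (by positivity : (0:ℝ) < 3*α/2) hd
      calc (2*α + 12*γ*x^2)⁻¹ ≤ (3*α/2)⁻¹ := h
        _ = 2/(3*α) := by rw [inv_div]
    have hg3 : (0:ℝ) ≤ |γ|^3/α^3 :=
      div_nonneg (by positivity) (pow_nonneg hα.le 3)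
    have hx7 : x^7 ≤ 128*N^7 := by
      calc x^7 ≤ (2*N)^7 := pow_le_pow_left₀ hx0.le hx1.2 7
        _ = 128*N^7 := by ring
    calc |4*γ^3/α^2 * (48*x^7 + 520*(γ/α)*x^9 + 1872*(γ/α)^2*x^11 + 3360*(γ/α)^3*x^13
          + 3072*(γ/α)^4*x^15 + 1152*(γ/α)^5*x^17) * (2*α + 12*γ*x^2)⁻¹|
        = |4*γ^3/α^2| * |48*x^7 + 520*(γ/α)*x^9 + 1872*(γ/α)^2*x^11 + 3360*(γ/α)^3*x^13
          + 3072*(γ/α)^4*x^15 + 1152*(γ/α)^5*x^17| * (2*α + 12*γ*x^2)⁻¹ := by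
          rw [abs_mul, abs_mul, abs_of_pos (inv_pos.2 hr0)]
      _ ≤ (4*|γ|^3/α^2) * (74 * x^7) * (2/(3*α)) := by
          rw [hA]
          apply mul_le_mul (mul_le_mul le_rfl hDle (abs_nonneg _)
            (div_nonneg (by positivity) (by positivity))) hrle (inv_pos.2 hr0).le
          exact mul_nonneg (div_nonneg (by positivity) (by positivity))
            (by nlinarith [hx7pos])
      _ = (592/3*x^7) * (|γ|^3/α^3) := by field_simp; ring
      _ ≤ (592/3*(128*N^7)) * (|γ|^3/α^3) :=
          mul_le_mul_of_nonneg_right (by linarith) hg3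
      _ ≤ (10^6*N^7) * (|γ|^3/α^3) := by
          apply mul_le_mul_of_nonneg_right ?_ hg3
          nlinarith [pow_nonneg hN0.le 7]
      _ = 10^6*|γ|^3*N^7/α^3 := by ring
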